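/- arXiv:2511.13455 — 2 statements merged into one kernel-verified Lean document; each statement's English description precedes it below -/
import Mathlib

section
/- If ‖w‖₁ > B̃ and λ* > 0 is such that ‖S_{λ*}(w)‖₁ = B̃, then S_{λ*}(w) is the Euclidean projection of w onto the ℓ1-ball of radius B̃. -/
open Finset

/-- Componentwise soft-thresholding operator. -/
noncomputable def softThresh {n : ℕ} (h : ℝ) (w : EuclideanSpace ℝ (Fin n)) :
    EuclideanSpace ℝ (Fin n) :=
  WithLp.toLp 2 (fun i => Real.sign (w i) * max (|w i| - h) 0)

/-- The ℓ1-norm on ℝⁿ. -/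
noncomputable def l1norm {n : ℕ} (w : EuclideanSpace ℝ (Fin n)) : ℝ :=
  ∑ i, |w i|

lemma st_abs_le (lam a : ℝ) (hlam : 0 < lam) :
    |a - Real.sign a * max (|a| - lam) 0| ≤ lam := by
  rcases lt_trichotomy a 0 with h | h | h
  · rw [Real.sign_of_neg h, abs_of_neg h]
    rcases le_or_gt (-a - lam) 0 with h2 | h2
    · rw [max_eq_right h2, abs_le]; constructor <;> nlinarith
    · rw [max_eq_left h2.le, abs_le]; constructor <;> nlinarith
  · simp [h]; linarith
  · rw [Real.sign_of_pos h, abs_of_pos h]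
    rcases le_or_gt (a - lam) 0 with h2 | h2
    · rw [max_eq_right h2, abs_le]; constructor <;> nlinarith
    · rw [max_eq_left h2.le, abs_le]; constructor <;> nlinarith

lemma st_mul (lam a : ℝ) (hlam : 0 < lam) :
    (a - Real.sign a * max (|a| - lam) 0) * (Real.sign a * max (|a| - lam) 0)
      = lam * |Real.sign a * max (|a| - lam) 0| := by
  rcases lt_trichotomy a 0 with h | h | h
  · rw [Real.sign_of_neg h, abs_of_neg h]
    rcases le_or_gt (-a - lam) 0 with h2 | h2
    · rw [max_eq_right h2]; simp
    · rw [max_eq_left h2.le]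
      have hneg : (-1 : ℝ) * (-a - lam) < 0 := by nlinarith
      rw [abs_of_neg hneg]; ring
  · simp [h]
  · rw [Real.sign_of_pos h, abs_of_pos h]
    rcases le_or_gt (a - lam) 0 with h2 | h2
    · rw [max_eq_right h2]; simp
    · rw [max_eq_left h2.le]
      have hpos : (0:ℝ) < (1 : ℝ) * (a - lam) := by nlinarith
      rw [abs_of_pos hpos]; ring

/-- If `‖w‖₁ > B̃` and `λ* > 0` is such that `‖S_{λ*}(w)‖₁ = B̃`, then `S_{λ*}(w)` is
the (unique) Euclidean projection of `w` onto the ℓ1-ball of radius `B̃`. -/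
theorem softThresh_is_proj_l1ball {n : ℕ} (B : ℝ) (hB : 0 < B)
    (w : EuclideanSpace ℝ (Fin n)) (hw : B < l1norm w)
    (lam : ℝ) (hlam : 0 < lam) (hS : l1norm (softThresh lam w) = B) :
    l1norm (softThresh lam w) ≤ B ∧
    (∀ z : EuclideanSpace ℝ (Fin n), l1norm z ≤ B →
      ‖softThresh lam w - w‖ ≤ ‖z - w‖) ∧
    (∀ z : EuclideanSpace ℝ (Fin n), l1norm z ≤ B →
      ‖z - w‖ = ‖softThresh lam w - w‖ → z = softThresh lam w) := by
  set p := softThresh lam w with hp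
  have hpi : ∀ i, p i = Real.sign (w i) * max (|w i| - lam) 0 := fun i => rfl
  -- key inner product inequality
  have hinner : ∀ z : EuclideanSpace ℝ (Fin n), l1norm z ≤ B →
      (inner ℝ (z - p) (w - p) : ℝ) ≤ 0 := by
    intro z hz
    have h1 : (inner ℝ (z - p) (w - p) : ℝ) = ∑ i, (z i - p i) * (w i - p i) := by
      rw [PiLp.inner_apply]
      refine Finset.sum_congr rfl fun i _ => ?_
      simp [RCLike.inner_apply]; ring
    rw [h1]
    have h2 : ∀ i, (z i - p i) * (w i - p i) = (w i - p i) * z i - lam * |p i| := by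
      intro i
      have := st_mul lam (w i) hlam
      rw [← hpi i] at this
      rw [← this]; ring
    rw [Finset.sum_congr rfl fun i _ => h2 i, Finset.sum_sub_distrib]
    have h3 : ∑ i, (w i - p i) * z i ≤ ∑ i, lam * |z i| := by
      refine Finset.sum_le_sum fun i _ => ?_
      calc (w i - p i) * z i ≤ |(w i - p i) * z i| := le_abs_self _
        _ = |w i - p i| * |z i| := abs_mul _ _
        _ ≤ lam * |z i| := by
            have := st_abs_le lam (w i) hlam
            rw [← hpi i] at this
            exact mul_le_mul_of_nonneg_right this (abs_nonneg _)
    have h4 : ∑ i, lam * |z i| = lam * l1norm z := by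
      rw [l1norm, Finset.mul_sum]
    have h5 : ∑ i, lam * |p i| = lam * B := by
      rw [← hS, l1norm, Finset.mul_sum]
    have h6 : lam * l1norm z ≤ lam * B := mul_le_mul_of_nonneg_left hz hlam.le
    linarith
  refine ⟨hS.le, ?_, ?_⟩
  · intro z hz
    have h := hinner z hz
    have hd : z - w = (z - p) + (p - w) := by abel
    have hsq : ‖z - w‖ ^ 2 = ‖z - p‖ ^ 2 + 2 * (inner ℝ (z - p) (p - w) : ℝ) + ‖p - w‖ ^ 2 := by
      rw [hd, norm_add_sq_real]
    have hneg : (inner ℝ (z - p) (p - w) : ℝ) = - (inner ℝ (z - p) (w - p) : ℝ) := by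
      have : p - w = -(w - p) := by abel
      rw [this, inner_neg_right]
    nlinarith [norm_nonneg (z - p), norm_nonneg (z - w), norm_nonneg (p - w), sq_nonneg ‖z - p‖]
  · intro z hz heq
    have h := hinner z hz
    have hd : z - w = (z - p) + (p - w) := by abel
    have hsq : ‖z - w‖ ^ 2 = ‖z - p‖ ^ 2 + 2 * (inner ℝ (z - p) (p - w) : ℝ) + ‖p - w‖ ^ 2 := by
      rw [hd, norm_add_sq_real]
    have hneg : (inner ℝ (z - p) (p - w) : ℝ) = - (inner ℝ (z - p) (w - p) : ℝ) := by
      have : p - w = -(w - p) := by abel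
      rw [this, inner_neg_right]
    have heq2 : ‖z - w‖ ^ 2 = ‖p - w‖ ^ 2 := by rw [heq]
    have hzp : ‖z - p‖ ^ 2 ≤ 0 := by linarith
    have : ‖z - p‖ = 0 := by nlinarith [norm_nonneg (z - p)]
    have := norm_eq_zero.mp this
    have := sub_eq_zero.mp this
    exact this
end

section
/- If 0 ≤ P ≤ 1 and 0 < Δt ≤ 1, then the explicit Euler update v_i^{n+1} = v_i^n + (Δt/N)Σ_j P(‖x_i^n−x_j^n‖)(v_j^n−v_i^n) expresses each v_i^{n+1} as a convex combination of {v_1^n,…,v_N^n}; consequently the convex hull of the velocities is non-increasing and max_i ‖v_i^n − v̄‖ is non-increasing in n. -/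
open Finset

/-- If `0 ≤ P ≤ 1` and `0 < Δt ≤ 1`, the explicit Euler update writes each new
velocity as a convex combination of the old ones; consequently the convex hull of
the velocities is non-increasing and `max_i ‖v_i - v̄‖` is non-increasing. -/
theorem discrete_cucker_smale_convex_combination {d N : ℕ} (hN : 0 < N)
    (P : ℝ → ℝ) (hP0 : ∀ r, 0 ≤ P r) (hP1 : ∀ r, P r ≤ 1)
    (Δt : ℝ) (hΔt : 0 < Δt) (hΔt1 : Δt ≤ 1)
    (x v v' : Fin N → EuclideanSpace ℝ (Fin d))
    (hupd : ∀ i, v' i = v i +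
      (Δt / (N : ℝ)) • ∑ j, P ‖x i - x j‖ • (v j - v i)) :
    (∀ i, ∃ c : Fin N → ℝ, (∀ j, 0 ≤ c j) ∧ (∑ j, c j) = 1 ∧
        v' i = ∑ j, c j • v j) ∧
    convexHull ℝ (Set.range v') ⊆ convexHull ℝ (Set.range v) ∧
    (haveI : Nonempty (Fin N) := Fin.pos_iff_nonempty.mp hN
     (Finset.univ.sup' Finset.univ_nonempty
        fun i => ‖v' i - (1 / (N : ℝ)) • ∑ j, v j‖) ≤
      Finset.univ.sup' Finset.univ_nonempty
        fun i => ‖v i - (1 / (N : ℝ)) • ∑ j, v j‖) := by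
  haveI : Nonempty (Fin N) := Fin.pos_iff_nonempty.mp hN
  have hNpos : (0:ℝ) < (N:ℝ) := by exact_mod_cast hN
  set a : Fin N → Fin N → ℝ := fun i j => (Δt / (N:ℝ)) * P ‖x i - x j‖ with ha
  have hq : 0 ≤ Δt / (N:ℝ) := div_nonneg hΔt.le hNpos.le
  have ha0 : ∀ i j, 0 ≤ a i j := fun i j => mul_nonneg hq (hP0 _)
  have haS : ∀ i, ∑ j, a i j ≤ 1 := by
    intro i
    calc ∑ j, a i j ≤ ∑ _j : Fin N, (Δt / (N:ℝ)) * 1 :=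
          Finset.sum_le_sum fun j _ => mul_le_mul_of_nonneg_left (hP1 _) hq
      _ = Δt := by
          rw [Finset.sum_const, Finset.card_univ, Fintype.card_fin, nsmul_eq_mul]
          field_simp
      _ ≤ 1 := hΔt1
  have key : ∀ i, ∃ c : Fin N → ℝ, (∀ j, 0 ≤ c j) ∧ (∑ j, c j) = 1 ∧
      v' i = ∑ j, c j • v j := by
    intro i
    refine ⟨fun j => a i j + (if j = i then 1 - ∑ k, a i k else 0), ?_, ?_, ?_⟩
    · intro j
      by_cases h : j = i
      · simp only; rw [if_pos h]; subst h
        have := haS j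
        have := ha0 j j
        linarith
      · simpa [h] using ha0 i j
    · rw [Finset.sum_add_distrib]
      simp
    · have hsum : ∑ j, (a i j + (if j = i then 1 - ∑ k, a i k else 0)) • v j
          = (∑ j, a i j • v j) + (1 - ∑ k, a i k) • v i := by
        simp_rw [add_smul, Finset.sum_add_distrib]
        congr 1
        rw [Finset.sum_eq_single i]
        · simp
        · intro b _ hb; simp [hb]
        · simp
      rw [hsum, hupd i, Finset.smul_sum]
      have hterm : ∀ j, (Δt / (N:ℝ)) • (P ‖x i - x j‖ • (v j - v i))
          = a i j • v j - a i j • v i := by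
        intro j; rw [smul_smul, smul_sub]
      simp_rw [hterm, Finset.sum_sub_distrib, ← Finset.sum_smul, sub_smul, one_smul]
      abel
  refine ⟨key, ?_, ?_⟩
  · refine convexHull_min ?_ (convex_convexHull ℝ _)
    rintro _ ⟨i, rfl⟩
    obtain ⟨c, hc0, hc1, hval⟩ := key i
    rw [hval]
    exact (convex_convexHull ℝ _).sum_mem (fun j _ => hc0 j) hc1
      fun j _ => subset_convexHull ℝ _ ⟨j, rfl⟩
  · set vb := (1 / (N:ℝ)) • ∑ j, v j
    apply Finset.sup'_le
    intro i _
    obtain ⟨c, hc0, hc1, hval⟩ := key i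
    have hdiff : v' i - vb = ∑ j, c j • (v j - vb) := by
      simp_rw [smul_sub, Finset.sum_sub_distrib, ← Finset.sum_smul, hc1, one_smul, hval]
    rw [hdiff]
    calc ‖∑ j, c j • (v j - vb)‖ ≤ ∑ j, ‖c j • (v j - vb)‖ := norm_sum_le _ _
      _ = ∑ j, c j * ‖v j - vb‖ := by
          refine Finset.sum_congr rfl fun j _ => ?_
          rw [norm_smul, Real.norm_eq_abs, abs_of_nonneg (hc0 j)]
      _ ≤ ∑ j, c j * (Finset.univ.sup' Finset.univ_nonempty
            fun i => ‖v i - vb‖) := by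
          refine Finset.sum_le_sum fun j _ => ?_
          exact mul_le_mul_of_nonneg_left
            (Finset.le_sup' (fun i => ‖v i - vb‖) (Finset.mem_univ j)) (hc0 j)
      _ = _ := by rw [← Finset.sum_mul, hc1, one_mul]
end
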